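/- Let G be a graph, ℂ and ℂ' collections of edge-tangles in G, and 𝓢 a (ℂ,ℂ')-segregator. Then there exists a (ℂ,ℂ')-segregator 𝓢* that is a cross-free family and satisfies ⋃_{[A,B]∈𝓢} A = ⋃_{[A,B]∈𝓢*} A. -/

import Mathlib

/-- A finite multigraph (loops and parallel edges allowed): each edge in `E`
has an unordered pair of endpoints in `V`. -/
structure Multigraph (V E : Type) where
  ends : E → Sym2 V

namespace Multigraph

variable {V E : Type}

/-- The edge `e` has an end in the vertex set `A`. -/
def incident (G : Multigraph V E) (A : Set V) (e : E) : Prop :=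
  ∃ x ∈ G.ends e, x ∈ A

/-- The edge `e` has one end in `A` and one end in `B`. -/
def crosses (G : Multigraph V E) (A B : Set V) (e : E) : Prop :=
  G.incident A e ∧ G.incident B e

/-- The order of the edge-cut `[A,B]`: the number of edges with one end in `A`
and one end in `B`. -/
noncomputable def cutOrder (G : Multigraph V E) (A B : Set V) : ℕ :=
  {e | G.crosses A B e}.ncard

/-- `[A,B]` is an edge-cut of `G`: an ordered pair of disjoint vertex sets
covering all vertices. -/
def IsCut (G : Multigraph V E) (A B : Set V) : Prop :=
  Disjoint A B ∧ A ∪ B = Set.univ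

end Multigraph

/-- An edge-tangle in `G` (of some order `ord`): a set of edge-cuts of order
less than `ord` satisfying axioms (E1)-(E3). -/
structure GTangle {V E : Type} (G : Multigraph V E) where
  ord : ℕ
  mem : Set V → Set V → Prop
  isCut_of_mem : ∀ A B, mem A B → G.IsCut A B
  order_lt_of_mem : ∀ A B, mem A B → G.cutOrder A B < ord
  e1 : ∀ A B, G.IsCut A B → G.cutOrder A B < ord → mem A B ∨ mem B A
  e2 : ∀ A₁ B₁ A₂ B₂ A₃ B₃, mem A₁ B₁ → mem A₂ B₂ → mem A₃ B₃ →
    (B₁ ∩ B₂ ∩ B₃).Nonempty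
  e3 : ∀ A B, mem A B → ord ≤ {e | G.incident B e}.ncard

/-- `[A,B]` is a `(Cs,ℰ)`-separator: `[A,B] ∈ ℰ' − ℰ` and `[B,A] ∈ ℰ − ℰ'` for
every `ℰ' ∈ Cs`. -/
def IsSep {V E : Type} {G : Multigraph V E} (Cs : Set (GTangle G))
    (ℰ : GTangle G) (A B : Set V) : Prop :=
  ∀ ℰ' ∈ Cs, (ℰ'.mem A B ∧ ¬ ℰ.mem A B) ∧ (ℰ.mem B A ∧ ¬ ℰ'.mem B A)

/-- `[A,B]` is a minimum `(Cs,ℰ)`-separator: a `(Cs,ℰ)`-separator of minimum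
order. -/
def IsMinSep {V E : Type} {G : Multigraph V E} (Cs : Set (GTangle G))
    (ℰ : GTangle G) (A B : Set V) : Prop :=
  IsSep Cs ℰ A B ∧ ∀ A' B' : Set V, IsSep Cs ℰ A' B' →
    G.cutOrder A B ≤ G.cutOrder A' B'

/-- A `(Cs,Cs')`-segregator: a set `𝓢` of edge-cuts such that every member is a
minimum `(Cs,ℰ')`-separator for some `ℰ' ∈ Cs'`, and for every `ℰ' ∈ Cs'` there
exists `[A,B] ∈ 𝓢` such that either `[A,B]` is a minimum `(Cs,ℰ')`-separator,
or `A' ⊆ A` for some minimum `(Cs,ℰ')`-separator `[A',B']`. -/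
def IsSegregator {V E : Type} {G : Multigraph V E}
    (Cs Cs' : Set (GTangle G)) (𝓢 : Set (Set V × Set V)) : Prop :=
  (∀ p ∈ 𝓢, ∃ ℰ' ∈ Cs', IsMinSep Cs ℰ' p.1 p.2) ∧
  (∀ ℰ' ∈ Cs', ∃ p ∈ 𝓢, IsMinSep Cs ℰ' p.1 p.2 ∨
    ∃ A' B' : Set V, IsMinSep Cs ℰ' A' B' ∧ A' ⊆ p.1)

/-- A family of edge-cuts is cross-free if the first components of any two
distinct members are disjoint. -/
def CrossFree {V : Type} (𝓓 : Set (Set V × Set V)) : Prop :=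
  ∀ p ∈ 𝓓, ∀ q ∈ 𝓓, p ≠ q → Disjoint p.1 q.1

section Aux
variable {V E : Type} {G : Multigraph V E}

lemma US_cutOrder_symm (G : Multigraph V E) (A B : Set V) :
    G.cutOrder A B = G.cutOrder B A := by
  unfold Multigraph.cutOrder
  congr 1
  ext e
  simp [Multigraph.crosses, and_comm]

lemma US_IsCut.symm {A B : Set V} (h : G.IsCut A B) : G.IsCut B A :=
  ⟨h.1.symm, by rw [Set.union_comm]; exact h.2⟩

lemma US_cut_mem_iff {A B : Set V} (h : G.IsCut A B) (v : V) : v ∈ B ↔ v ∉ A := by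
  constructor
  · intro hB hA
    exact Set.disjoint_left.mp h.1 hA hB
  · intro hA
    have := h.2
    have hv : v ∈ A ∪ B := by rw [this]; trivial
    rcases hv with hv | hv
    · exact absurd hv hA
    · exact hv

lemma US_cut_union_inter {A B C D : Set V} (h1 : G.IsCut A B) (h2 : G.IsCut C D) :
    G.IsCut (A ∪ C) (B ∩ D) := by
  constructor
  · rw [Set.disjoint_left]
    rintro v (hv | hv) ⟨hB, hD⟩
    · exact Set.disjoint_left.mp h1.1 hv hB
    · exact Set.disjoint_left.mp h2.1 hv hD
  · apply Set.eq_univ_of_forall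
    intro v
    by_cases hB : v ∈ B
    · by_cases hD : v ∈ D
      · exact Or.inr ⟨hB, hD⟩
      · exact Or.inl (Or.inr ((US_cut_mem_iff (US_IsCut.symm h2) v).mpr hD))
    · exact Or.inl (Or.inl (by
        have := (US_cut_mem_iff h1 v).not_left
        rcases (Set.eq_univ_iff_forall.mp h1.2 v) with h | h
        · exact h
        · exact absurd h hB))

lemma US_cut_inter_union {A B C D : Set V} (h1 : G.IsCut A B) (h2 : G.IsCut C D) :
    G.IsCut (A ∩ C) (B ∪ D) :=
  US_IsCut.symm (US_cut_union_inter (US_IsCut.symm h1) (US_IsCut.symm h2))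

end Aux

section Sub
attribute [local instance] Classical.propDecidable
variable {V E : Type} [Fintype V] [Fintype E] {G : Multigraph V E}

lemma US_cutOrder_sum (A B : Set V) :
    G.cutOrder A B = ∑ e : E, if G.crosses A B e then 1 else 0 := by
  classical
  unfold Multigraph.cutOrder
  rw [Set.ncard_eq_toFinset_card']
  rw [Set.toFinset_setOf]
  rw [Finset.card_filter]

lemma US_incident_iff (A : Set V) (x y : V) (e : E) (hxy : G.ends e = s(x, y)) :
    G.incident A e ↔ x ∈ A ∨ y ∈ A := by
  unfold Multigraph.incident
  rw [hxy]
  constructor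
  · rintro ⟨v, hv, hvA⟩
    rcases Sym2.mem_iff.mp hv with rfl | rfl
    · exact Or.inl hvA
    · exact Or.inr hvA
  · rintro (h | h)
    · exact ⟨x, by simp, h⟩
    · exact ⟨y, by simp, h⟩

lemma US_pointwise {A B C D : Set V} (hAB : G.IsCut A B) (hCD : G.IsCut C D) (e : E) :
    ((if G.crosses (A ∪ C) (B ∩ D) e then 1 else 0) +
      (if G.crosses (A ∩ C) (B ∪ D) e then 1 else 0) : ℕ) ≤
    (if G.crosses A B e then 1 else 0) + (if G.crosses C D e then 1 else 0) := by
  classical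
  obtain ⟨⟨x, y⟩, hxy⟩ := Quot.exists_rep (G.ends e)
  have hxy' : G.ends e = s(x, y) := hxy.symm
  have h1 := US_incident_iff (G := G) A x y e hxy'
  have h2 := US_incident_iff (G := G) B x y e hxy'
  have h3 := US_incident_iff (G := G) C x y e hxy'
  have h4 := US_incident_iff (G := G) D x y e hxy'
  have h5 := US_incident_iff (G := G) (A ∪ C) x y e hxy'
  have h6 := US_incident_iff (G := G) (B ∩ D) x y e hxy'
  have h7 := US_incident_iff (G := G) (A ∩ C) x y e hxy'
  have h8 := US_incident_iff (G := G) (B ∪ D) x y e hxy'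
  have hxB := US_cut_mem_iff hAB x
  have hyB := US_cut_mem_iff hAB y
  have hxD := US_cut_mem_iff hCD x
  have hyD := US_cut_mem_iff hCD y
  unfold Multigraph.crosses
  rw [h1, h2, h3, h4, h5, h6, h7, h8]
  simp only [Set.mem_union, Set.mem_inter_iff]
  by_cases hxA : x ∈ A <;> by_cases hxC : x ∈ C <;> by_cases hyA : y ∈ A <;> by_cases hyC : y ∈ C <;>
    simp_all <;> omega

lemma US_submod {A B C D : Set V} (hAB : G.IsCut A B) (hCD : G.IsCut C D) :
    G.cutOrder (A ∪ C) (B ∩ D) + G.cutOrder (A ∩ C) (B ∪ D) ≤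
      G.cutOrder A B + G.cutOrder C D := by
  classical
  rw [US_cutOrder_sum, US_cutOrder_sum, US_cutOrder_sum, US_cutOrder_sum,
    ← Finset.sum_add_distrib, ← Finset.sum_add_distrib]
  exact Finset.sum_le_sum fun e _ => US_pointwise hAB hCD e

lemma US_posimod {A B C D : Set V} (hAB : G.IsCut A B) (hCD : G.IsCut C D) :
    G.cutOrder (A ∩ D) (B ∪ C) + G.cutOrder (C ∩ B) (D ∪ A) ≤
      G.cutOrder A B + G.cutOrder C D := by
  have h := US_submod hAB (US_IsCut.symm hCD)
  have e1 : G.cutOrder (C ∩ B) (D ∪ A) = G.cutOrder (A ∪ D) (B ∩ C) := by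
    rw [US_cutOrder_symm, Set.inter_comm, Set.union_comm]
  have e2 : G.cutOrder D C = G.cutOrder C D := US_cutOrder_symm G D C
  omega

end Sub

section Tangle
variable {V E : Type} [Fintype V] [Fintype E] {G : Multigraph V E}

lemma US_not_mem_symm (ℰ : GTangle G) {X Y : Set V} (h : ℰ.mem X Y) : ¬ ℰ.mem Y X := by
  intro h'
  obtain ⟨v, hv⟩ := ℰ.e2 _ _ _ _ _ _ h h' h'
  have hcut := ℰ.isCut_of_mem _ _ h
  exact Set.disjoint_left.mp hcut.1 hv.2 hv.1.1

/-- Forced orientation: if `ℰ` has memberships with big sides `Y1, Y2` and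
`Y1 ∩ Y2 ∩ Q = ∅`, then `ℰ` must orient the cut `[P,Q]` as `mem Q P`. -/
lemma US_force (ℰ : GTangle G) {P Q X1 Y1 X2 Y2 : Set V}
    (hcut : G.IsCut P Q) (hord : G.cutOrder P Q < ℰ.ord)
    (m1 : ℰ.mem X1 Y1) (m2 : ℰ.mem X2 Y2) (hdis : Y1 ∩ Y2 ∩ Q = ∅) : ℰ.mem Q P := by
  rcases ℰ.e1 P Q hcut hord with h | h
  · exfalso
    obtain ⟨v, hv⟩ := ℰ.e2 _ _ _ _ _ _ m1 m2 h
    rw [hdis] at hv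
    exact hv
  · exact h

/-- Consistency: a tangle orients a small-order cut whose small side shrank. -/
lemma US_consist (ℰ : GTangle G) {X Y X' Y' : Set V} (h : ℰ.mem X Y)
    (hcut : G.IsCut X' Y') (hsub : X' ⊆ X) (hord : G.cutOrder X' Y' < ℰ.ord) :
    ℰ.mem X' Y' := by
  have hXY := ℰ.isCut_of_mem _ _ h
  apply US_force ℰ (US_IsCut.symm hcut) (by rwa [US_cutOrder_symm]) h h
  apply Set.eq_empty_iff_forall_notMem.mpr
  rintro v ⟨⟨hY, _⟩, hX'⟩
  exact Set.disjoint_left.mp hXY.1 (hsub hX') hY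

variable {Cs : Set (GTangle G)} {ℰ₀ : GTangle G}

lemma US_sep_build {ℰ' : GTangle G} {A B : Set V}
    (h1 : ∀ ℰ ∈ Cs, ℰ.mem A B) (h2 : ℰ'.mem B A) : IsSep Cs ℰ' A B := by
  intro ℰ hℰ
  exact ⟨⟨h1 ℰ hℰ, US_not_mem_symm ℰ' h2⟩, ⟨h2, US_not_mem_symm ℰ (h1 ℰ hℰ)⟩⟩

lemma US_minsep_cut (hne : ℰ₀ ∈ Cs) {ℰ' : GTangle G} {A B : Set V}
    (h : IsMinSep Cs ℰ' A B) : G.IsCut A B :=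
  ℰ₀.isCut_of_mem _ _ (h.1 ℰ₀ hne).1.1

lemma US_minsep_lt {ℰ' ℰ : GTangle G} {A B : Set V}
    (h : IsMinSep Cs ℰ' A B) (hℰ : ℰ ∈ Cs) : G.cutOrder A B < ℰ.ord :=
  ℰ.order_lt_of_mem _ _ (h.1 ℰ hℰ).1.1

lemma US_minsep_lt' (hne : ℰ₀ ∈ Cs) {ℰ' : GTangle G} {A B : Set V}
    (h : IsMinSep Cs ℰ' A B) : G.cutOrder A B < ℰ'.ord := by
  rw [US_cutOrder_symm]
  exact ℰ'.order_lt_of_mem _ _ (h.1 ℰ₀ hne).2.1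

/-- In the good case, the union corner is a minimum separator for the second tangle. -/
lemma US_goodunion (hne : ℰ₀ ∈ Cs) {ℰ'₁ ℰ'₂ : GTangle G} {A B C D : Set V}
    (h1 : IsMinSep Cs ℰ'₁ A B) (h2 : IsMinSep Cs ℰ'₂ C D)
    (hord : G.cutOrder (A ∪ C) (B ∩ D) ≤ G.cutOrder C D) :
    IsMinSep Cs ℰ'₂ (A ∪ C) (B ∩ D) := by
  have hABcut := US_minsep_cut hne h1
  have hCDcut := US_minsep_cut hne h2
  have hcorner := US_cut_union_inter hABcut hCDcut
  have hdis : B ∩ D ∩ (A ∪ C) = ∅ := by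
    apply Set.eq_empty_iff_forall_notMem.mpr
    rintro v ⟨⟨hB, hD⟩, (hA | hC)⟩
    · exact Set.disjoint_left.mp hABcut.1 hA hB
    · exact Set.disjoint_left.mp hCDcut.1 hC hD
  have hsep : IsSep Cs ℰ'₂ (A ∪ C) (B ∩ D) := by
    apply US_sep_build
    · intro ℰ hℰ
      exact US_force ℰ (US_IsCut.symm hcorner)
        (by rw [US_cutOrder_symm]; exact lt_of_le_of_lt hord (US_minsep_lt h2 hℰ))
        (h1.1 ℰ hℰ).1.1 (h2.1 ℰ hℰ).1.1 hdis
    · exact US_consist ℰ'₂ (h2.1 ℰ₀ hne).2.1 (US_IsCut.symm hcorner) Set.inter_subset_right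
        (by rw [US_cutOrder_symm]; exact lt_of_le_of_lt hord (US_minsep_lt' hne h2))
  exact ⟨hsep, fun A' B' hs => le_trans hord (h2.2 A' B' hs)⟩

end Tangle

section Core
attribute [local instance] Classical.propDecidable
variable {V E : Type} [Fintype V] [Fintype E] {G : Multigraph V E}
variable {Cs : Set (GTangle G)} {ℰ₀ : GTangle G}

/-- In the bad case, splitting the second separator along the first yields a
minimum separator for the second tangle. -/
lemma US_badsplit (hne : ℰ₀ ∈ Cs) {ℰ'₁ ℰ'₂ : GTangle G} {A B C D : Set V}
    (h1 : IsMinSep Cs ℰ'₁ A B) (h2 : IsMinSep Cs ℰ'₂ C D)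
    (hbad1 : G.cutOrder A B < G.cutOrder (A ∪ C) (B ∩ D))
    (hbad2 : G.cutOrder C D < G.cutOrder (A ∪ C) (B ∩ D)) :
    IsMinSep Cs ℰ'₂ (C ∩ B) (D ∪ A) := by
  have hABcut := US_minsep_cut hne h1
  have hCDcut := US_minsep_cut hne h2
  have hIC : G.IsCut (A ∩ C) (B ∪ D) := US_cut_inter_union hABcut hCDcut
  have hAD : G.IsCut (A ∩ D) (B ∪ C) := US_cut_inter_union hABcut (US_IsCut.symm hCDcut)
  have hCB : G.IsCut (C ∩ B) (D ∪ A) := US_cut_inter_union hCDcut (US_IsCut.symm hABcut)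
  have hsub := US_submod hABcut hCDcut
  have hsmall1 : G.cutOrder (A ∩ C) (B ∪ D) < G.cutOrder A B := by omega
  have hsmall2 : G.cutOrder (A ∩ C) (B ∪ D) < G.cutOrder C D := by omega
  have memIC : ∀ ℰ ∈ Cs, ℰ.mem (A ∩ C) (B ∪ D) := fun ℰ hℰ =>
    US_consist ℰ (h1.1 ℰ hℰ).1.1 hIC Set.inter_subset_left
      (lt_trans hsmall1 (US_minsep_lt h1 hℰ))
  -- the second tangle orients the intersection corner towards its big side
  have hB1 : ℰ'₂.mem (A ∩ C) (B ∪ D) := by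
    rcases ℰ'₂.e1 (A ∩ C) (B ∪ D) hIC (lt_trans hsmall2 (US_minsep_lt' hne h2)) with h | h
    · exact h
    · exfalso
      have hsep : IsSep Cs ℰ'₂ (A ∩ C) (B ∪ D) := US_sep_build memIC h
      have := h2.2 _ _ hsep
      omega
  have hB1' : ℰ'₁.mem (A ∩ C) (B ∪ D) := by
    rcases ℰ'₁.e1 (A ∩ C) (B ∪ D) hIC (lt_trans hsmall1 (US_minsep_lt' hne h1)) with h | h
    · exact h
    · exfalso
      have hsep : IsSep Cs ℰ'₁ (A ∩ C) (B ∪ D) := US_sep_build memIC h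
      have := h1.2 _ _ hsep
      omega
  -- the order of the (A ∩ D, B ∪ C) corner is at least that of [A,B]
  have hADge : G.cutOrder A B ≤ G.cutOrder (A ∩ D) (B ∪ C) := by
    by_contra hlt
    push_neg at hlt
    have memAD : ∀ ℰ ∈ Cs, ℰ.mem (A ∩ D) (B ∪ C) := fun ℰ hℰ =>
      US_consist ℰ (h1.1 ℰ hℰ).1.1 hAD Set.inter_subset_left
        (lt_trans hlt (US_minsep_lt h1 hℰ))
    have hforced : ℰ'₁.mem (B ∪ C) (A ∩ D) := by
      apply US_force ℰ'₁ hAD (lt_trans hlt (US_minsep_lt' hne h1)) hB1' (h1.1 ℰ₀ hne).2.1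
      apply Set.eq_empty_iff_forall_notMem.mpr
      rintro v ⟨⟨(hB | hD), hA⟩, (hB' | hC)⟩
      · exact Set.disjoint_left.mp hABcut.1 hA hB
      · exact Set.disjoint_left.mp hABcut.1 hA hB
      · exact Set.disjoint_left.mp hABcut.1 hA hB'
      · exact Set.disjoint_left.mp hCDcut.1 hC hD
    have hsep : IsSep Cs ℰ'₁ (A ∩ D) (B ∪ C) := US_sep_build memAD hforced
    have := h1.2 _ _ hsep
    omega
  have hposi := US_posimod hABcut hCDcut
  have hle : G.cutOrder (C ∩ B) (D ∪ A) ≤ G.cutOrder C D := by omega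
  have hforced : ℰ'₂.mem (D ∪ A) (C ∩ B) := by
    apply US_force ℰ'₂ hCB (lt_of_le_of_lt hle (US_minsep_lt' hne h2)) hB1 (h2.1 ℰ₀ hne).2.1
    apply Set.eq_empty_iff_forall_notMem.mpr
    rintro v ⟨⟨(hB | hD), hC⟩, (hD' | hA)⟩
    · exact Set.disjoint_left.mp hCDcut.1 hC hD'
    · exact Set.disjoint_left.mp hABcut.1 hA hB
    · exact Set.disjoint_left.mp hCDcut.1 hC hD
    · exact Set.disjoint_left.mp hCDcut.1 hC hD
  have memCB : ∀ ℰ ∈ Cs, ℰ.mem (C ∩ B) (D ∪ A) := fun ℰ hℰ =>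
    US_consist ℰ (h2.1 ℰ hℰ).1.1 hCB Set.inter_subset_left
      (lt_of_le_of_lt hle (US_minsep_lt h2 hℰ))
  exact ⟨US_sep_build memCB hforced, fun A' B' hs => le_trans hle (h2.2 A' B' hs)⟩

/-- In the good case where the second separator has strictly smaller order,
one of the two corners on the second separator's side is a minimum separator
for the second tangle. -/
lemma US_goodsmall (hne : ℰ₀ ∈ Cs) {ℰ'₁ ℰ'₂ : GTangle G} {A B C D : Set V}
    (h1 : IsMinSep Cs ℰ'₁ A B) (h2 : IsMinSep Cs ℰ'₂ C D)
    (hk : G.cutOrder C D < G.cutOrder A B)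
    (hord : G.cutOrder (A ∪ C) (B ∩ D) ≤ G.cutOrder A B) :
    IsMinSep Cs ℰ'₂ (C ∩ B) (D ∪ A) ∨ IsMinSep Cs ℰ'₂ (A ∩ C) (B ∪ D) := by
  have hABcut := US_minsep_cut hne h1
  have hCDcut := US_minsep_cut hne h2
  have hIC : G.IsCut (A ∩ C) (B ∪ D) := US_cut_inter_union hABcut hCDcut
  have hAD : G.IsCut (A ∩ D) (B ∪ C) := US_cut_inter_union hABcut (US_IsCut.symm hCDcut)
  have hCB : G.IsCut (C ∩ B) (D ∪ A) := US_cut_inter_union hCDcut (US_IsCut.symm hABcut)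
  have hUC : G.IsCut (A ∪ C) (B ∩ D) := US_cut_union_inter hABcut hCDcut
  -- Step 1 : ℰ'₁ orients [C,D] towards D
  have hstep1 : ℰ'₁.mem C D := by
    rcases ℰ'₁.e1 C D hCDcut (lt_trans hk (US_minsep_lt' hne h1)) with h | h
    · exact h
    · exfalso
      have hsep : IsSep Cs ℰ'₁ C D := US_sep_build (fun ℰ hℰ => (h2.1 ℰ hℰ).1.1) h
      have := h1.2 _ _ hsep
      omega
  -- Step 2 : the (A ∩ D, B ∪ C) corner has order at least that of [A,B]
  have hADge : G.cutOrder A B ≤ G.cutOrder (A ∩ D) (B ∪ C) := by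
    by_contra hlt
    push_neg at hlt
    have memAD : ∀ ℰ ∈ Cs, ℰ.mem (A ∩ D) (B ∪ C) := fun ℰ hℰ =>
      US_consist ℰ (h1.1 ℰ hℰ).1.1 hAD Set.inter_subset_left
        (lt_trans hlt (US_minsep_lt h1 hℰ))
    have hforced : ℰ'₁.mem (B ∪ C) (A ∩ D) := by
      apply US_force ℰ'₁ hAD (lt_trans hlt (US_minsep_lt' hne h1)) (h1.1 ℰ₀ hne).2.1 hstep1
      apply Set.eq_empty_iff_forall_notMem.mpr
      rintro v ⟨⟨hA, hD⟩, (hB | hC)⟩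
      · exact Set.disjoint_left.mp hABcut.1 hA hB
      · exact Set.disjoint_left.mp hCDcut.1 hC hD
    have hsep : IsSep Cs ℰ'₁ (A ∩ D) (B ∪ C) := US_sep_build memAD hforced
    have := h1.2 _ _ hsep
    omega
  have hposi := US_posimod hABcut hCDcut
  have hle : G.cutOrder (C ∩ B) (D ∪ A) ≤ G.cutOrder C D := by omega
  have memCB : ∀ ℰ ∈ Cs, ℰ.mem (C ∩ B) (D ∪ A) := fun ℰ hℰ =>
    US_consist ℰ (h2.1 ℰ hℰ).1.1 hCB Set.inter_subset_left
      (lt_of_le_of_lt hle (US_minsep_lt h2 hℰ))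
  rcases ℰ'₂.e1 (C ∩ B) (D ∪ A) hCB (lt_of_le_of_lt hle (US_minsep_lt' hne h2)) with hb | hg
  · -- ℰ'₂ points into C ∩ B : use the intersection corner A ∩ C instead
    right
    have hUge : G.cutOrder A B ≤ G.cutOrder (A ∪ C) (B ∩ D) := by
      by_contra hlt
      push_neg at hlt
      have hdis : B ∩ D ∩ (A ∪ C) = ∅ := by
        apply Set.eq_empty_iff_forall_notMem.mpr
        rintro v ⟨⟨hB, hD⟩, (hA | hC)⟩
        · exact Set.disjoint_left.mp hABcut.1 hA hB
        · exact Set.disjoint_left.mp hCDcut.1 hC hD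
      have memUC : ∀ ℰ ∈ Cs, ℰ.mem (A ∪ C) (B ∩ D) := fun ℰ hℰ =>
        US_force ℰ (US_IsCut.symm hUC)
          (by rw [US_cutOrder_symm]; exact lt_trans hlt (US_minsep_lt h1 hℰ))
          (h1.1 ℰ hℰ).1.1 (h2.1 ℰ hℰ).1.1 hdis
      have hforced : ℰ'₁.mem (B ∩ D) (A ∪ C) :=
        US_consist ℰ'₁ (h1.1 ℰ₀ hne).2.1 (US_IsCut.symm hUC) Set.inter_subset_left
          (by rw [US_cutOrder_symm]; exact lt_trans hlt (US_minsep_lt' hne h1))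
      have hsep : IsSep Cs ℰ'₁ (A ∪ C) (B ∩ D) := US_sep_build memUC hforced
      have := h1.2 _ _ hsep
      omega
    have hsub := US_submod hABcut hCDcut
    have hICle : G.cutOrder (A ∩ C) (B ∪ D) ≤ G.cutOrder C D := by omega
    have hforced : ℰ'₂.mem (B ∪ D) (A ∩ C) := by
      apply US_force ℰ'₂ hIC (lt_of_le_of_lt hICle (US_minsep_lt' hne h2)) hb (h2.1 ℰ₀ hne).2.1
      apply Set.eq_empty_iff_forall_notMem.mpr
      rintro v ⟨⟨(hD | hA), hC⟩, (hB' | hD')⟩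
      · exact Set.disjoint_left.mp hCDcut.1 hC hD
      · exact Set.disjoint_left.mp hCDcut.1 hC hD
      · exact Set.disjoint_left.mp hABcut.1 hA hB'
      · exact Set.disjoint_left.mp hCDcut.1 hC hD'
    have memIC : ∀ ℰ ∈ Cs, ℰ.mem (A ∩ C) (B ∪ D) := fun ℰ hℰ =>
      US_consist ℰ (h1.1 ℰ hℰ).1.1 hIC Set.inter_subset_left
        (lt_of_le_of_lt hICle (US_minsep_lt h2 hℰ))
    exact ⟨US_sep_build memIC hforced, fun A' B' hs => le_trans hICle (h2.2 A' B' hs)⟩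
  · left
    exact ⟨US_sep_build memCB hg, fun A' B' hs => le_trans hle (h2.2 A' B' hs)⟩

end Core

section Families
attribute [local instance] Classical.propDecidable
variable {V E : Type} [Fintype V] [Fintype E] {G : Multigraph V E}

/-- Every member of the family is a minimum separator for some tangle in Cs'. -/
def USWit (Cs Cs' : Set (GTangle G)) (T : Set (Set V × Set V)) : Prop :=
  ∀ p ∈ T, ∃ ℰ' ∈ Cs', IsMinSep Cs ℰ' p.1 p.2

/-- The tangle ℰ' is served by the family. -/
def USServes (Cs : Set (GTangle G)) (T : Set (Set V × Set V)) (ℰ' : GTangle G) : Prop :=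
  ∃ p ∈ T, IsMinSep Cs ℰ' p.1 p.2 ∨ ∃ A' B' : Set V, IsMinSep Cs ℰ' A' B' ∧ A' ⊆ p.1

noncomputable def USmu {V : Type} [Fintype V] (T : Set (Set V × Set V)) : ℕ :=
  ∑ m ∈ (Set.toFinite T).toFinset, m.1.ncard

lemma USmu_remove {T : Set (Set V × Set V)} {q : Set V × Set V} (hq : q ∈ T) :
    USmu (T \ {q}) + q.1.ncard = USmu T := by
  classical
  unfold USmu
  rw [← Finset.sum_erase_add ((Set.toFinite T).toFinset) _
    (show q ∈ (Set.toFinite T).toFinset by simpa using hq)]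
  congr 1
  apply Finset.sum_congr ?_ (fun _ _ => rfl)
  ext x
  simp only [Set.Finite.mem_toFinset, Set.mem_diff, Set.mem_singleton_iff, Finset.mem_erase]
  tauto

lemma USmu_insert_le {T : Set (Set V × Set V)} {r : Set V × Set V} :
    USmu (insert r T) ≤ r.1.ncard + USmu T := by
  classical
  by_cases hr : r ∈ T
  · rw [Set.insert_eq_self.mpr hr]
    omega
  · unfold USmu
    have heq : (Set.toFinite (insert r T)).toFinset = insert r (Set.toFinite T).toFinset := by
      ext x
      simp only [Set.Finite.mem_toFinset, Set.mem_insert_iff, Finset.mem_insert]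
    rw [heq, Finset.sum_insert (by simpa using hr)]

lemma US_subset_U {T : Set (Set V × Set V)} {p : Set V × Set V} (hp : p ∈ T) :
    p.1 ⊆ ⋃ m ∈ T, m.1 :=
  Set.subset_biUnion_of_mem hp

/-- One uncrossing step. -/
lemma US_step {Cs Cs' : Set (GTangle G)} {ℰ₀ : GTangle G} (hne : ℰ₀ ∈ Cs)
    {U : Set V} {T : Set (Set V × Set V)} {p q : Set V × Set V}
    (hWit : USWit Cs Cs' T) (hU : (⋃ m ∈ T, m.1) = U)
    (hp : p ∈ T) (hq : q ∈ T) (hpq : p ≠ q) (hx : ¬ Disjoint p.1 q.1)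
    (hk : G.cutOrder p.1 p.2 ≤ G.cutOrder q.1 q.2) :
    ∃ T₂, USWit Cs Cs' T₂ ∧ (⋃ m ∈ T₂, m.1) = U ∧ USmu T₂ < USmu T := by
  obtain ⟨ℰ'p, hℰ'p, hPmin⟩ := hWit p hp
  obtain ⟨ℰ'q, hℰ'q, hQmin⟩ := hWit q hq
  have hxne : (p.1 ∩ q.1).Nonempty := Set.not_disjoint_iff_nonempty_inter.mp hx
  have hpcut := US_minsep_cut hne hPmin
  by_cases hgood : G.cutOrder (p.1 ∪ q.1) (p.2 ∩ q.2) ≤ G.cutOrder q.1 q.2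
  · -- merge p and q
    refine ⟨insert (p.1 ∪ q.1, p.2 ∩ q.2) ((T \ {p}) \ {q}), ?_, ?_, ?_⟩
    · rintro m (rfl | ⟨⟨hm, -⟩, -⟩)
      · exact ⟨ℰ'q, hℰ'q, US_goodunion hne hPmin hQmin hgood⟩
      · exact hWit m hm
    · rw [← hU]
      ext x
      simp only [Set.mem_iUnion, exists_prop, Set.mem_insert_iff, Set.mem_diff,
        Set.mem_singleton_iff]
      constructor
      · rintro ⟨m, (rfl | ⟨⟨hm, -⟩, -⟩), hxm⟩
        · rcases hxm with hxp | hxq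
          · exact ⟨p, hp, hxp⟩
          · exact ⟨q, hq, hxq⟩
        · exact ⟨m, hm, hxm⟩
      · rintro ⟨m, hm, hxm⟩
        by_cases hmp : m = p
        · exact ⟨(p.1 ∪ q.1, p.2 ∩ q.2), Or.inl rfl, Or.inl (hmp ▸ hxm)⟩
        · by_cases hmq : m = q
          · exact ⟨(p.1 ∪ q.1, p.2 ∩ q.2), Or.inl rfl, Or.inr (hmq ▸ hxm)⟩
          · exact ⟨m, Or.inr ⟨⟨hm, hmp⟩, hmq⟩, hxm⟩
    · have h1 := USmu_insert_le (T := (T \ {p}) \ {q}) (r := (p.1 ∪ q.1, p.2 ∩ q.2))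
      have h2 : USmu ((T \ {p}) \ {q}) + q.1.ncard = USmu (T \ {p}) :=
        USmu_remove ⟨hq, fun hh => hpq (Set.mem_singleton_iff.mp hh).symm⟩
      have h3 : USmu (T \ {p}) + p.1.ncard = USmu T := USmu_remove hp
      have h4 := Set.ncard_union_add_ncard_inter p.1 q.1
      have h5 : 0 < (p.1 ∩ q.1).ncard := (Set.ncard_pos (Set.toFinite _)).mpr hxne
      simp only at h1
      omega
  · -- split q along p
    push_neg at hgood
    have hbad1 : G.cutOrder p.1 p.2 < G.cutOrder (p.1 ∪ q.1) (p.2 ∩ q.2) :=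
      lt_of_le_of_lt hk hgood
    have hsplit := US_badsplit hne hPmin hQmin hbad1 hgood
    refine ⟨insert (q.1 ∩ p.2, q.2 ∪ p.1) (T \ {q}), ?_, ?_, ?_⟩
    · rintro m (rfl | ⟨hm, -⟩)
      · exact ⟨ℰ'q, hℰ'q, hsplit⟩
      · exact hWit m hm
    · rw [← hU]
      ext x
      simp only [Set.mem_iUnion, exists_prop, Set.mem_insert_iff, Set.mem_diff,
        Set.mem_singleton_iff]
      constructor
      · rintro ⟨m, (rfl | ⟨hm, -⟩), hxm⟩
        · exact ⟨q, hq, hxm.1⟩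
        · exact ⟨m, hm, hxm⟩
      · rintro ⟨m, hm, hxm⟩
        by_cases hmq : m = q
        · subst hmq
          by_cases hxp : x ∈ p.1
          · exact ⟨p, Or.inr ⟨hp, hpq⟩, hxp⟩
          · have hx2 : x ∈ p.2 := by
              rcases Set.eq_univ_iff_forall.mp hpcut.2 x with hh | hh
              · exact absurd hh hxp
              · exact hh
            exact ⟨(m.1 ∩ p.2, m.2 ∪ p.1), Or.inl rfl, ⟨hxm, hx2⟩⟩
        · exact ⟨m, Or.inr ⟨hm, hmq⟩, hxm⟩
    · have h1 := USmu_insert_le (T := T \ {q}) (r := (q.1 ∩ p.2, q.2 ∪ p.1))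
      have h2 : USmu (T \ {q}) + q.1.ncard = USmu T := USmu_remove hq
      have h5 : (q.1 ∩ p.2).ncard < q.1.ncard := by
        apply Set.ncard_lt_ncard ?_ (Set.toFinite _)
        constructor
        · exact Set.inter_subset_left
        · intro hsub
          obtain ⟨x, hxp, hxq⟩ := hxne
          have := (hsub hxq).2
          exact Set.disjoint_left.mp hpcut.1 hxp this
      simp only at h1
      omega

/-- Existence of a cross-free witnessed family with the same union. -/
lemma US_exists_good {Cs Cs' : Set (GTangle G)} {ℰ₀ : GTangle G} (hne : ℰ₀ ∈ Cs)
    {U : Set V} :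
    ∀ n (T : Set (Set V × Set V)), USmu T = n → USWit Cs Cs' T → (⋃ m ∈ T, m.1) = U →
    ∃ T', USWit Cs Cs' T' ∧ CrossFree T' ∧ (⋃ m ∈ T', m.1) = U := by
  intro n
  induction n using Nat.strong_induction_on with
  | _ n IH =>
    intro T hmu hWit hU
    by_cases hcf : CrossFree T
    · exact ⟨T, hWit, hcf, hU⟩
    · simp only [CrossFree, not_forall] at hcf
      obtain ⟨p, hp, q, hq, hpq, hx⟩ := hcf
      rcases le_total (G.cutOrder p.1 p.2) (G.cutOrder q.1 q.2) with hk | hk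
      · obtain ⟨T₂, hWit₂, hU₂, hlt⟩ := US_step hne hWit hU hp hq hpq hx hk
        exact IH (USmu T₂) (hmu ▸ hlt) T₂ rfl hWit₂ hU₂
      · obtain ⟨T₂, hWit₂, hU₂, hlt⟩ := US_step hne hWit hU hq hp (Ne.symm hpq)
          (fun hh => hx hh.symm) hk
        exact IH (USmu T₂) (hmu ▸ hlt) T₂ rfl hWit₂ hU₂

end Families

section Serve
attribute [local instance] Classical.propDecidable
variable {V E : Type} [Fintype V] [Fintype E] {G : Multigraph V E}

/-- Serving lemma: a good family can be modified (preserving goodness, the union,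
and all served tangles) so as to also serve a given tangle having a minimum
separator inside the union. -/
lemma US_serve {Cs Cs' : Set (GTangle G)} {ℰ₀ : GTangle G} (hne : ℰ₀ ∈ Cs) {U : Set V} :
    ∀ n (T : Set (Set V × Set V)) (ℰ' : GTangle G) (A' B' : Set V),
      ℰ' ∈ Cs' → USWit Cs Cs' T → CrossFree T → (⋃ m ∈ T, m.1) = U →
      IsMinSep Cs ℰ' A' B' → A' ⊆ U →
      ({m ∈ T | (m.1 ∩ A').Nonempty ∧ ¬ m.1 ⊆ A'}).ncard = n →
      ∃ T', USWit Cs Cs' T' ∧ CrossFree T' ∧ (⋃ m ∈ T', m.1) = U ∧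
        USServes Cs T' ℰ' ∧ ∀ ℰ'', USServes Cs T ℰ'' → USServes Cs T' ℰ'' := by
  intro n
  induction n using Nat.strong_induction_on with
  | _ n IH =>
  intro T ℰ' A' B' hℰ' hWit hcf hU hmin hsubU hcount
  by_cases hR : ({m ∈ T | (m.1 ∩ A').Nonempty ∧ ¬ m.1 ⊆ A'} : Set (Set V × Set V)) = ∅
  · -- Base case: every member of T meeting A' is contained in A'.
    have hmet : ∀ m ∈ T, (m.1 ∩ A').Nonempty → m.1 ⊆ A' := by
      intro m hm hne' 
      by_contra hcon
      exact Set.eq_empty_iff_forall_notMem.mp hR m ⟨hm, hne', hcon⟩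
    refine ⟨insert (A', B') {m ∈ T | m.1 ∩ A' = ∅}, ?_, ?_, ?_, ?_, ?_⟩
    · rintro m (rfl | ⟨hm, -⟩)
      · exact ⟨ℰ', hℰ', hmin⟩
      · exact hWit m hm
    · rintro a (rfl | ⟨ha, hadis⟩) b (rfl | ⟨hb, hbdis⟩) hab
      · exact absurd rfl hab
      · exact Set.disjoint_iff_inter_eq_empty.mpr (by rw [Set.inter_comm]; exact hbdis)
      · exact Set.disjoint_iff_inter_eq_empty.mpr hadis
      · exact hcf a ha b hb hab
    · apply Set.Subset.antisymm
      · apply Set.iUnion₂_subset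
        rintro m (rfl | ⟨hm, -⟩)
        · exact hsubU
        · exact hU ▸ US_subset_U hm
      · intro x hxU
        rw [← hU] at hxU
        obtain ⟨m, hm, hxm⟩ := Set.mem_iUnion₂.mp hxU
        by_cases hme : (m.1 ∩ A').Nonempty
        · exact Set.mem_iUnion₂.mpr ⟨(A', B'), Set.mem_insert _ _, hmet m hm hme hxm⟩
        · exact Set.mem_iUnion₂.mpr
            ⟨m, Set.mem_insert_of_mem _ ⟨hm, Set.not_nonempty_iff_eq_empty.mp hme⟩, hxm⟩
    · exact ⟨(A', B'), Set.mem_insert _ _, Or.inl hmin⟩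
    · rintro ℰ'' ⟨m, hm, hserve⟩
      by_cases hme : (m.1 ∩ A').Nonempty
      · have hmsub := hmet m hm hme
        refine ⟨(A', B'), Set.mem_insert _ _, Or.inr ?_⟩
        rcases hserve with hms | ⟨a, b, hab, hsub⟩
        · exact ⟨m.1, m.2, hms, hmsub⟩
        · exact ⟨a, b, hab, hsub.trans hmsub⟩
      · exact ⟨m, Set.mem_insert_of_mem _ ⟨hm, Set.not_nonempty_iff_eq_empty.mp hme⟩, hserve⟩
  · -- Inductive step: pick an unresolved member p.
    obtain ⟨p, hpT, hpA, hpns⟩ := Set.nonempty_iff_ne_empty.mpr hR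
    obtain ⟨ℰ'₁, hℰ'₁, hmin1⟩ := hWit p hpT
    have hpcut := US_minsep_cut hne hmin1
    have hpsubU : p.1 ⊆ U := hU ▸ US_subset_U hpT
    -- Recursion helper.
    have hkey : ∀ A'' B'' : Set V, IsMinSep Cs ℰ' A'' B'' → A'' ⊆ U →
        ({m ∈ T | (m.1 ∩ A'').Nonempty ∧ ¬ m.1 ⊆ A''} : Set (Set V × Set V)) ⊆
          ({m ∈ T | (m.1 ∩ A').Nonempty ∧ ¬ m.1 ⊆ A'} : Set (Set V × Set V)) \ {p} →
        ∃ T', USWit Cs Cs' T' ∧ CrossFree T' ∧ (⋃ m ∈ T', m.1) = U ∧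
          USServes Cs T' ℰ' ∧ ∀ ℰ'', USServes Cs T ℰ'' → USServes Cs T' ℰ'' := by
      intro A'' B'' hmin'' hsub'' hsubset
      have h1 := Set.ncard_le_ncard hsubset (Set.toFinite _)
      have h2 := Set.ncard_diff_singleton_lt_of_mem
        (show p ∈ ({m ∈ T | (m.1 ∩ A').Nonempty ∧ ¬ m.1 ⊆ A'} : Set (Set V × Set V))
          from ⟨hpT, hpA, hpns⟩) (Set.toFinite _)
      exact IH _ (by omega) T ℰ' A'' B'' hℰ' hWit hcf hU hmin'' hsub'' rfl
    -- The split candidate A' ∩ p.2 shrinks the unresolved set.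
    have hsplitsub : ({m ∈ T | (m.1 ∩ (A' ∩ p.2)).Nonempty ∧ ¬ m.1 ⊆ A' ∩ p.2} :
        Set (Set V × Set V)) ⊆
        ({m ∈ T | (m.1 ∩ A').Nonempty ∧ ¬ m.1 ⊆ A'} : Set (Set V × Set V)) \ {p} := by
      rintro m ⟨hm, hne', hns⟩
      have hmp : m ≠ p := by
        rintro rfl
        obtain ⟨x, hx1, hx2, hx3⟩ := hne'
        exact Set.disjoint_left.mp hpcut.1 hx1 hx3
      have hdisj : Disjoint m.1 p.1 := hcf m hm p hpT hmp
      refine ⟨⟨hm, ?_, ?_⟩, hmp⟩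
      · obtain ⟨x, hx1, hx2, hx3⟩ := hne'
        exact ⟨x, hx1, hx2⟩
      · intro hcon
        apply hns
        intro x hx
        refine ⟨hcon hx, ?_⟩
        have hx2 : x ∉ p.1 := Set.disjoint_left.mp hdisj hx
        rcases Set.eq_univ_iff_forall.mp hpcut.2 x with hh | hh
        · exact absurd hh hx2
        · exact hh
    -- The union candidate p.1 ∪ A' shrinks the unresolved set.
    have hunionsub : ({m ∈ T | (m.1 ∩ (p.1 ∪ A')).Nonempty ∧ ¬ m.1 ⊆ p.1 ∪ A'} :
        Set (Set V × Set V)) ⊆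
        ({m ∈ T | (m.1 ∩ A').Nonempty ∧ ¬ m.1 ⊆ A'} : Set (Set V × Set V)) \ {p} := by
      rintro m ⟨hm, hne', hns⟩
      have hmp : m ≠ p := by
        rintro rfl
        exact hns fun x hx => Or.inl hx
      have hdisj : Disjoint m.1 p.1 := hcf m hm p hpT hmp
      refine ⟨⟨hm, ?_, ?_⟩, hmp⟩
      · obtain ⟨x, hx1, (hx2 | hx2)⟩ := hne'
        · exact absurd hx2 (Set.disjoint_left.mp hdisj hx1)
        · exact ⟨x, hx1, hx2⟩
      · intro hcon
        exact hns fun x hx => Or.inr (hcon hx)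
    by_cases hgood : G.cutOrder (p.1 ∪ A') (p.2 ∩ B') ≤
        max (G.cutOrder p.1 p.2) (G.cutOrder A' B')
    · by_cases hks : G.cutOrder p.1 p.2 ≤ G.cutOrder A' B'
      · -- good case, p has the smaller order: merge upwards
        rw [max_eq_right hks] at hgood
        exact hkey _ _ (US_goodunion hne hmin1 hmin hgood)
          (Set.union_subset hpsubU hsubU) hunionsub
      · -- good case, A' has the strictly smaller order
        push_neg at hks
        rw [max_eq_left hks.le] at hgood
        rcases US_goodsmall hne hmin1 hmin hks hgood with hL | hR
        · exact hkey _ _ hL (Set.inter_subset_left.trans hsubU) hsplitsub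
        · -- ℰ' is served inside p
          exact ⟨T, hWit, hcf, hU,
            ⟨p, hpT, Or.inr ⟨p.1 ∩ A', p.2 ∪ B', hR, Set.inter_subset_left⟩⟩,
            fun _ hs => hs⟩
    · -- bad case: split A' along p
      push_neg at hgood
      have hbad1 : G.cutOrder p.1 p.2 < G.cutOrder (p.1 ∪ A') (p.2 ∩ B') :=
        lt_of_le_of_lt (le_max_left _ _) hgood
      have hbad2 : G.cutOrder A' B' < G.cutOrder (p.1 ∪ A') (p.2 ∩ B') :=
        lt_of_le_of_lt (le_max_right _ _) hgood
      exact hkey _ _ (US_badsplit hne hmin1 hmin hbad1 hbad2)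
        (Set.inter_subset_left.trans hsubU) hsplitsub

end Serve

/-- Let `G` be a graph, `Cs` and `Cs'` collections of edge-tangles
in `G`, and `𝓢` a `(Cs,Cs')`-segregator. Then there exists a `(Cs,Cs')`-segregator
`𝓢*` that is a cross-free family and satisfies
`⋃_{[A,B]∈𝓢} A = ⋃_{[A,B]∈𝓢*} A`. -/
theorem uncross_segregator {V E : Type} [Fintype V] [Fintype E]
    (G : Multigraph V E) (Cs Cs' : Set (GTangle G))
    (𝓢 : Set (Set V × Set V)) (h : IsSegregator Cs Cs' 𝓢) :
    ∃ 𝓢' : Set (Set V × Set V), IsSegregator Cs Cs' 𝓢' ∧ CrossFree 𝓢' ∧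
      (⋃ p ∈ 𝓢, p.1) = ⋃ p ∈ 𝓢', p.1 := by
  classical
  by_cases hS : 𝓢 = ∅
  · refine ⟨∅, ⟨?_, ?_⟩, ?_, by rw [hS]⟩
    · intro p hp
      exact absurd hp (Set.notMem_empty p)
    · intro ℰ' hℰ'
      obtain ⟨p, hp, -⟩ := h.2 ℰ' hℰ'
      rw [hS] at hp
      exact absurd hp (Set.notMem_empty p)
    · intro p hp
      exact absurd hp (Set.notMem_empty p)
  rcases Set.eq_empty_or_nonempty Cs with hCs | ⟨ℰ₀, hne⟩
  · -- Cs is empty: a single zero-order cut works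
    obtain ⟨p₀, hp₀⟩ := Set.nonempty_iff_ne_empty.mpr hS
    obtain ⟨ℰ'₀, hℰ'₀, -⟩ := h.1 p₀ hp₀
    have hzero : G.cutOrder (⋃ p ∈ 𝓢, p.1) ∅ = 0 := by
      have hset : {e : E | G.crosses (⋃ p ∈ 𝓢, p.1) ∅ e} = ∅ := by
        ext e
        simp [Multigraph.crosses, Multigraph.incident]
      unfold Multigraph.cutOrder
      rw [hset, Set.ncard_empty]
    have hminany : ∀ ℰ' : GTangle G, IsMinSep Cs ℰ' (⋃ p ∈ 𝓢, p.1) ∅ := by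
      intro ℰ'
      refine ⟨?_, ?_⟩
      · intro ℰ hℰ
        rw [hCs] at hℰ
        exact absurd hℰ (Set.notMem_empty ℰ)
      · intro A' B' _
        rw [hzero]
        exact Nat.zero_le _
    refine ⟨{(⋃ p ∈ 𝓢, p.1, ∅)}, ⟨?_, ?_⟩, ?_, ?_⟩
    · intro p hp
      rw [Set.mem_singleton_iff] at hp
      subst hp
      exact ⟨ℰ'₀, hℰ'₀, hminany _⟩
    · intro ℰ' hℰ'
      exact ⟨_, Set.mem_singleton _, Or.inl (hminany ℰ')⟩
    · intro a ha b hb hab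
      rw [Set.mem_singleton_iff] at ha hb
      subst ha; subst hb
      exact absurd rfl hab
    · exact (Set.biUnion_singleton ((⋃ p ∈ 𝓢, p.1, ∅) : Set V × Set V) (fun p => p.1)).symm
  · -- main case
    obtain ⟨T₁, hWit₁, hcf₁, hU₁⟩ :=
      US_exists_good (Cs' := Cs') hne (U := ⋃ p ∈ 𝓢, p.1) (USmu 𝓢) 𝓢 rfl h.1 rfl
    obtain ⟨Tm, hTm, hmax⟩ := Set.Finite.exists_maximalFor
      (fun T => {ℰ'' | ℰ'' ∈ Cs' ∧ USServes Cs T ℰ''})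
      {T : Set (Set V × Set V) | USWit Cs Cs' T ∧ CrossFree T ∧
        (⋃ m ∈ T, m.1) = ⋃ p ∈ 𝓢, p.1}
      (Set.toFinite _) ⟨T₁, hWit₁, hcf₁, hU₁⟩
    obtain ⟨hWitm, hcfm, hUm⟩ := hTm
    have hserveall : ∀ ℰ' ∈ Cs', USServes Cs Tm ℰ' := by
      intro ℰ' hℰ'
      have hsep : ∃ A₀ B₀ : Set V, IsMinSep Cs ℰ' A₀ B₀ ∧ A₀ ⊆ ⋃ p ∈ 𝓢, p.1 := by
        rcases h.2 ℰ' hℰ' with ⟨p, hp, hmp | ⟨A₀, B₀, hms, hsub⟩⟩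
        · exact ⟨p.1, p.2, hmp, Set.subset_biUnion_of_mem hp⟩
        · exact ⟨A₀, B₀, hms, hsub.trans (Set.subset_biUnion_of_mem hp)⟩
      obtain ⟨A₀, B₀, hms, hsubU⟩ := hsep
      obtain ⟨T', hWit', hcf', hU', hserve', hpres'⟩ :=
        US_serve hne _ Tm ℰ' A₀ B₀ hℰ' hWitm hcfm hUm hms hsubU rfl
      have heq : {ℰ'' | ℰ'' ∈ Cs' ∧ USServes Cs Tm ℰ''} = {ℰ'' | ℰ'' ∈ Cs' ∧ USServes Cs T' ℰ''} :=
        le_antisymm (fun ℰ'' hh => ⟨hh.1, hpres' ℰ'' hh.2⟩)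
        (hmax (j := T') ⟨hWit', hcf', hU'⟩ (fun ℰ'' hh => ⟨hh.1, hpres' ℰ'' hh.2⟩))
      have hmem : ℰ' ∈ {ℰ'' | ℰ'' ∈ Cs' ∧ USServes Cs T' ℰ''} := ⟨hℰ', hserve'⟩
      rw [← heq] at hmem
      exact hmem.2
    exact ⟨Tm, ⟨hWitm, hserveall⟩, hcfm, hUm.symm⟩
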